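/- Let (R, m) be a commutative Noetherian local ring, x₁, …, x_d ∈ m a regular sequence on R, and I an ideal of R with x₁ ∈ I. Let w ∈ R and N ≥ 1. If x₁^N · w lies in the R-submodule (x₁^N, x₂^N, …, x_d^N)·I of R, then w ∈ I + (x₂^N, …, x_d^N)R. -/

import Mathlib

open Ideal

section Aux

variable {R : Type*} [CommRing R]

/-- Elementwise formulation of "weakly regular sequence modulo the ideal `K`". -/
def WRI (K : Ideal R) : List R → Prop
  | [] => True
  | a :: as => (∀ t, a * t ∈ K → t ∈ K) ∧ WRI (K ⊔ Ideal.span {a}) as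

lemma pow_nzd {K : Ideal R} {a : R} (h : ∀ t, a * t ∈ K → t ∈ K) :
    ∀ (n : ℕ) (t : R), a ^ n * t ∈ K → t ∈ K := by
  intro n
  induction n with
  | zero => intro t ht; simpa using ht
  | succ n ih =>
    intro t ht
    refine ih t (h _ ?_)
    rw [← mul_assoc, ← pow_succ']
    exact ht

lemma mem_sup_span {K : Ideal R} {a t : R} :
    t ∈ K ⊔ Ideal.span {a} ↔ ∃ k ∈ K, ∃ c, t = k + c * a := by
  constructor
  · intro h
    obtain ⟨y, hy, z, hz, rfl⟩ := Submodule.mem_sup.mp h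
    obtain ⟨c, rfl⟩ := Ideal.mem_span_singleton'.mp hz
    exact ⟨y, hy, c, rfl⟩
  · rintro ⟨k, hk, c, rfl⟩
    exact add_mem (Submodule.mem_sup_left hk)
      (Submodule.mem_sup_right (Ideal.mem_span_singleton'.mpr ⟨c, rfl⟩))

/-- The key extension lemma: if `as` is weakly regular modulo `K + (a)` and modulo
`K + (aⁿ)`, and `aⁿ` "divides injectively" modulo `K`, then `as` is weakly regular
modulo `K + (aⁿ⁺¹)`. -/
lemma lemC {a : R} (n : ℕ) :
    ∀ (as : List R) (K : Ideal R),
      WRI (K ⊔ span {a}) as → WRI (K ⊔ span {a ^ n}) as →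
      (∀ t, a ^ n * t ∈ K ⊔ span {a ^ (n + 1)} → t ∈ K ⊔ span {a}) →
      WRI (K ⊔ span {a ^ (n + 1)}) as
  | [], _, _, _, _ => trivial
  | b :: as, K, hS, hQ, hinj => by
    have hmono : K ⊔ span {a ^ (n + 1)} ≤ K ⊔ span {a ^ n} :=
      sup_le_sup_left (Ideal.span_singleton_le_span_singleton.mpr
        (pow_dvd_pow a (Nat.le_succ n))) K
    constructor
    · intro t ht
      obtain ⟨k, hk, c, htEq⟩ := mem_sup_span.mp (hQ.1 t (hmono ht))
      have h2 : a ^ n * (b * c) ∈ K ⊔ span {a ^ (n + 1)} := by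
        have heq : a ^ n * (b * c) = b * t + (-(b * k)) := by rw [htEq]; ring
        rw [heq]
        exact add_mem ht (Submodule.mem_sup_left (neg_mem (K.mul_mem_left b hk)))
      obtain ⟨k', hk', c', hc'⟩ := mem_sup_span.mp (hS.1 c (hinj _ h2))
      have htEq2 : t = (k + k' * a ^ n) + c' * a ^ (n + 1) := by
        rw [htEq, hc']; ring
      rw [htEq2]
      exact add_mem (Submodule.mem_sup_left (add_mem hk (K.mul_mem_right _ hk')))
        (Submodule.mem_sup_right (Ideal.mem_span_singleton'.mpr ⟨c', rfl⟩))
    · rw [sup_right_comm]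
      refine lemC n as (K ⊔ span {b}) ?_ ?_ ?_
      · rw [sup_right_comm]; exact hS.2
      · rw [sup_right_comm]; exact hQ.2
      · intro t ht
        rw [sup_right_comm] at ht
        obtain ⟨u, hu, c, hEq1⟩ := mem_sup_span.mp ht
        obtain ⟨k, hk, β, hEq2⟩ := mem_sup_span.mp hu
        rw [hEq2] at hEq1
        -- hEq1 : a ^ n * t = k + β * a ^ (n+1) + c * b
        have hbc : b * c ∈ K ⊔ span {a ^ n} := by
          have heq : b * c = (t - β * a) * a ^ n + (-k) := by
            linear_combination -hEq1
          rw [heq]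
          exact add_mem (Submodule.mem_sup_right (Ideal.mem_span_singleton'.mpr ⟨_, rfl⟩))
            (Submodule.mem_sup_left (neg_mem hk))
        obtain ⟨k₂, hk₂, γ, hEq3⟩ := mem_sup_span.mp (hQ.1 c hbc)
        have h4 : a ^ n * (t - β * a - γ * b) ∈ K ⊔ span {a ^ (n + 1)} := by
          have heq : a ^ n * (t - β * a - γ * b) = k + k₂ * b := by
            linear_combination hEq1 + b * hEq3
          rw [heq]
          exact Submodule.mem_sup_left (add_mem hk (K.mul_mem_right b hk₂))
        have h5 := hinj _ h4
        have hmono2 : K ⊔ span {a} ≤ (K ⊔ span {b}) ⊔ span {a} :=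
          sup_le_sup_right le_sup_left _
        have htEq : t = (t - β * a - γ * b) + γ * b + β * a := by ring
        rw [htEq]
        refine add_mem (add_mem (hmono2 h5) ?_) ?_
        · exact Submodule.mem_sup_left (Submodule.mem_sup_right
            (Ideal.mem_span_singleton'.mpr ⟨γ, rfl⟩))
        · exact Submodule.mem_sup_right (Ideal.mem_span_singleton'.mpr ⟨β, rfl⟩)

lemma keyA {K : Ideal R} {a : R} (hK : ∀ t, a * t ∈ K → t ∈ K) {as : List R}
    (hS : WRI (K ⊔ span {a}) as) : ∀ n, WRI (K ⊔ span {a ^ (n + 1)}) as := by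
  intro n
  induction n with
  | zero => simpa using hS
  | succ n ih =>
    refine lemC (n + 1) as K hS ih ?_
    intro t ht
    obtain ⟨k, hk, c, hEq⟩ := mem_sup_span.mp ht
    have h2 : a ^ (n + 1) * (t - c * a) ∈ K := by
      have heq : a ^ (n + 1) * (t - c * a) = k := by linear_combination hEq
      rw [heq]; exact hk
    have h3 : t - c * a ∈ K := pow_nzd hK (n + 1) _ h2
    have htEq : t = (t - c * a) + c * a := by ring
    rw [htEq]
    exact add_mem (Submodule.mem_sup_left h3)
      (Submodule.mem_sup_right (Ideal.mem_span_singleton'.mpr ⟨c, rfl⟩))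

lemma lemP {N : ℕ} : ∀ (as : List R) (K : Ideal R),
    WRI K as → WRI K (as.map (· ^ (N + 1)))
  | [], _, _ => trivial
  | a :: as, K, h => ⟨pow_nzd h.1 (N + 1), lemP as _ (keyA h.1 h.2 N)⟩

lemma wri_last : ∀ (as : List R) (K : Ideal R) (b : R), WRI K (as ++ [b]) →
    ∀ t, b * t ∈ K ⊔ Ideal.ofList as → t ∈ K ⊔ Ideal.ofList as
  | [], K, b, h, t, ht => by
    simp only [ofList_nil, sup_bot_eq] at ht ⊢
    exact h.1 t ht
  | a :: as, K, b, h, t, ht => by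
    simp only [ofList_cons, ← sup_assoc] at ht ⊢
    exact wri_last as (K ⊔ span {a}) b h.2 t ht

lemma wri_of_flat : ∀ (rs : List R) (K : Ideal R),
    (∀ i (hi : i < rs.length) (t : R), rs[i] * t ∈ K ⊔ Ideal.ofList (rs.take i) →
      t ∈ K ⊔ Ideal.ofList (rs.take i)) → WRI K rs
  | [], _, _ => trivial
  | a :: as, K, hf => by
    constructor
    · intro t ht
      have h0 := hf 0 (by simp) t
      simp only [List.getElem_cons_zero, List.take_zero, ofList_nil, sup_bot_eq] at h0
      exact h0 ht
    · refine wri_of_flat as (K ⊔ span {a}) ?_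
      intro i hi t
      have := hf (i + 1) (by simpa using Nat.succ_lt_succ hi) t
      simpa only [List.getElem_cons_succ, List.take_succ_cons, ofList_cons,
        ← sup_assoc] using this

lemma flat_of_iwr {rs : List R} (h : RingTheory.Sequence.IsWeaklyRegular R rs) :
    ∀ i (hi : i < rs.length) (t : R), rs[i] * t ∈ Ideal.ofList (rs.take i) →
      t ∈ Ideal.ofList (rs.take i) := by
  intro i hi t ht
  have hreg := h.regular_mod_prev i hi
  set J := Ideal.ofList (rs.take i) with hJ
  have hJT : (J • (⊤ : Submodule R R)) = J := by
    rw [smul_eq_mul, mul_top]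
  have key : rs[i] • (Submodule.Quotient.mk t : R ⧸ (J • (⊤ : Submodule R R)))
      = rs[i] • (0 : R ⧸ (J • (⊤ : Submodule R R))) := by
    rw [smul_zero, ← Submodule.Quotient.mk_smul, Submodule.Quotient.mk_eq_zero, hJT]
    simpa [smul_eq_mul] using ht
  have := hreg key
  rw [Submodule.Quotient.mk_eq_zero, hJT] at this
  exact this

end Aux

/-- For a regular sequence `x₁, …, x_d ∈ m` in a Noetherian local
ring and an ideal `I` containing `x₁`: if `x₁^N·w ∈ (x₁^N, x₂^N, …, x_d^N)·I`, then
`w ∈ I + (x₂^N, …, x_d^N)R`. -/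
theorem statement11 {R : Type*} [CommRing R] [IsNoetherianRing R] [IsLocalRing R]
    {d : ℕ} (x : R) (x' : Fin d → R)
    (hx : x ∈ IsLocalRing.maximalIdeal R)
    (hx' : ∀ i, x' i ∈ IsLocalRing.maximalIdeal R)
    (hreg : RingTheory.Sequence.IsRegular R (x :: List.ofFn x'))
    (I : Ideal R) (hxI : x ∈ I) (w : R) (N : ℕ) (hN : 1 ≤ N)
    (h : x ^ N * w ∈ Ideal.span ({x ^ N} ∪ Set.range fun i => x' i ^ N) * I) :
    w ∈ I + Ideal.span (Set.range fun i => x' i ^ N) := by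
  obtain ⟨N', rfl⟩ : ∃ N', N = N' + 1 := ⟨N - 1, (Nat.succ_pred_eq_of_pos hN).symm⟩
  -- permute the regular sequence so that `x` comes last
  have hperm : (x :: List.ofFn x').Perm (List.ofFn x' ++ [x]) :=
    (List.perm_append_singleton x (List.ofFn x')).symm
  have hmem : ∀ r ∈ (x :: List.ofFn x'), r ∈ IsLocalRing.maximalIdeal R := by
    intro r hr
    rcases List.mem_cons.mp hr with rfl | hr
    · exact hx
    · obtain ⟨i, rfl⟩ := List.mem_ofFn.mp hr
      exact hx' i
  have hwr : RingTheory.Sequence.IsWeaklyRegular R (List.ofFn x' ++ [x]) :=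
    IsLocalRing.isWeaklyRegular_of_perm_of_subset_maximalIdeal
      hreg.toIsWeaklyRegular hperm hmem
  have h1 : WRI (⊥ : Ideal R) (List.ofFn x' ++ [x]) := by
    refine wri_of_flat _ _ ?_
    intro i hi t
    simpa only [bot_sup_eq] using flat_of_iwr hwr i hi t
  have h2 : WRI (⊥ : Ideal R) (((List.ofFn x').map (· ^ (N' + 1))) ++ [x ^ (N' + 1)]) := by
    have := lemP (N := N') _ _ h1
    simpa only [List.map_append, List.map_cons, List.map_nil] using this
  have h3 := wri_last _ _ _ h2
  set J : Ideal R := Ideal.span (Set.range fun i => x' i ^ (N' + 1)) with hJdef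
  have hofList : Ideal.ofList ((List.ofFn x').map (· ^ (N' + 1))) = J := by
    rw [List.map_ofFn]
    refine congrArg Ideal.span (Set.ext fun r => ?_)
    simp [List.mem_ofFn, Function.comp, eq_comm]
  -- split the hypothesis
  have hsplit : Ideal.span ({x ^ (N' + 1)} ∪ Set.range fun i => x' i ^ (N' + 1)) * I
      ≤ Ideal.span {x ^ (N' + 1)} * I ⊔ J := by
    rw [Ideal.span_union, Ideal.sup_mul]
    exact sup_le_sup_left (Ideal.mul_le_left (I := J) (J := I)) _
  obtain ⟨u, hu, v, hv, huv⟩ := Submodule.mem_sup.mp (hsplit h)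
  obtain ⟨a, haI, hax⟩ := Ideal.mem_span_singleton_mul.mp hu
  have hxv : x ^ (N' + 1) * (w - a) ∈ J := by
    have heq : x ^ (N' + 1) * (w - a) = v := by linear_combination -huv - hax
    rw [heq]; exact hv
  have hw1 : w - a ∈ J := by
    have := h3 (w - a) (by rw [hofList, bot_sup_eq]; exact hxv)
    rwa [hofList, bot_sup_eq] at this
  have htEq : w = a + (w - a) := by ring
  rw [htEq, Submodule.add_eq_sup]
  exact add_mem (Submodule.mem_sup_left haI) (Submodule.mem_sup_right hw1)
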